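/- The adaptive rate model is a reparametrization of the kinked rate model: for all B ∈ ℝ, the adaptive rate function with parameters (S̄, B̄, u*, r_t, k_d) equals the kinked rate function with the same S̄, B̄, u* and with r_base = r_t/k_d, r_slope1 = r_t·(1 − 1/k_d), r_slope2 = r_t·(k_d − 1). -/
import Mathlib


/-- The adaptive rate model is a reparametrization of the kinked rate model:
for all B, the adaptive rate with parameters (S̄, B̄, u*, r_t, k_d) equals the kinked rate
with r_base = r_t/k_d, r_slope1 = r_t·(1 − 1/k_d), r_slope2 = r_t·(k_d − 1). -/
theorem adaptive_rate_eq_kinked_rate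
    (Sbar Bbar us rt kd : ℝ)
    (hS : 0 < Sbar) (hB : 0 ≤ Bbar)
    (hus0 : 0 < us) (hus1 : us < 1)
    (hrt : 0 < rt) (hkd : 1 < kd) :
    let badaptive : ℝ → ℝ := fun B =>
      if Bbar + B < Sbar * us then
        rt * (1 + (1 - 1 / kd) * (Bbar + B - Sbar * us) / (Sbar * us))
      else
        rt * (1 + (kd - 1) * (Bbar + B - Sbar * us) / (Sbar * (1 - us)))
    let rbase : ℝ := rt / kd
    let rslope1 : ℝ := rt * (1 - 1 / kd)
    let rslope2 : ℝ := rt * (kd - 1)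
    let bkinked : ℝ → ℝ := fun B =>
      if Bbar + B < Sbar * us then
        rbase + (Bbar + B) / (Sbar * us) * rslope1
      else
        rbase + rslope1 + (Bbar + B - Sbar * us) / (Sbar * (1 - us)) * rslope2
    ∀ B : ℝ, badaptive B = bkinked B := by
  intro badaptive rbase rslope1 rslope2 bkinked B
  have hsu : Sbar * us ≠ 0 := by positivity
  have hkd0 : kd ≠ 0 := by linarith
  simp only [badaptive, bkinked, rbase, rslope1, rslope2]
  split
  · field_simp; ring
  · field_simp; ring
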